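/- Let T be a random variable with values in the positive integers, let b > 0 be a real number, and suppose Pr[T ≤ i] ≤ (λ+1)^i · 2^{-n} for all natural numbers i, where λ ≥ 1 is an integer. Then E[T] ≥ n / log₂(λ+1) - 2. -/

import Mathlib

open MeasureTheory ENNReal

theorem stmt_2 {Ω : Type*} [MeasurableSpace Ω] (μ : Measure Ω) [IsProbabilityMeasure μ]
    (n L : ℕ) (hL : 1 ≤ L) (b : ℝ) (hb : 0 < b)
    (T : Ω → ℕ) (hT : ∀ ω, 1 ≤ T ω)
    (h : ∀ i : ℕ, μ {ω | T ω ≤ i} ≤ ((L : ℝ≥0∞) + 1) ^ i / 2 ^ n) :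
    ENNReal.ofReal ((n : ℝ) / Real.logb 2 ((L : ℝ) + 1) - 2) ≤ ∫⁻ ω, (T ω : ℝ≥0∞) ∂μ := by
  set c := Real.logb 2 ((L : ℝ) + 1) with hc
  have hL2 : (2 : ℝ) ≤ (L : ℝ) + 1 := by
    have : (1 : ℝ) ≤ (L : ℝ) := by exact_mod_cast hL
    linarith
  have hc1 : 1 ≤ c := by
    exact le_trans (le_of_eq (Real.logb_self_eq_one one_lt_two).symm)
      (Real.logb_le_logb_of_le one_lt_two two_pos hL2)
  have hcpos : (0 : ℝ) < c := lt_of_lt_of_le one_pos hc1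
  by_cases hn : (n : ℝ) / c - 2 ≤ 0
  · rw [ENNReal.ofReal_eq_zero.mpr hn]; exact zero_le
  push_neg at hn
  set m : ℕ := ⌊(n : ℝ) / c⌋₊ with hm
  have hdnn : (0 : ℝ) ≤ (n : ℝ) / c := by positivity
  have hm_le : (m : ℝ) ≤ (n : ℝ) / c := Nat.floor_le hdnn
  have hm_gt : (n : ℝ) / c < m + 1 := Nat.lt_floor_add_one _
  -- (L+1)^m ≤ 2^n in ℕ
  have hLm : (L + 1) ^ m ≤ 2 ^ n := by
    have h1 : ((L : ℝ) + 1) ^ m ≤ 2 ^ n := by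
      have hlog : Real.logb 2 (((L : ℝ) + 1) ^ m) ≤ Real.logb 2 ((2 : ℝ) ^ n) := by
        rw [Real.logb_pow, Real.logb_pow, Real.logb_self_eq_one one_lt_two, mul_one]
        calc (m : ℝ) * c ≤ ((n : ℝ) / c) * c := by
              exact mul_le_mul_of_nonneg_right hm_le (le_of_lt hcpos)
          _ = n := by field_simp
      have := (Real.logb_le_logb one_lt_two (by positivity) (by positivity)).mp hlog
      exact this
    exact_mod_cast h1
  -- geometric sum bound in ℕ
  have hgeom : ∀ k : ℕ, ∑ i ∈ Finset.range k, (L + 1) ^ i ≤ (L + 1) ^ k := by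
    intro k
    induction k with
    | zero => simp
    | succ k ih =>
      rw [Finset.sum_range_succ, pow_succ]
      have : (L + 1) ^ k * 2 ≤ (L + 1) ^ k * (L + 1) := by
        apply Nat.mul_le_mul_left; omega
      omega
  -- sum of probabilities ≤ 1
  have hsum1 : ∑ i ∈ Finset.range m, μ {ω | T ω ≤ i} ≤ 1 := by
    calc ∑ i ∈ Finset.range m, μ {ω | T ω ≤ i}
        ≤ ∑ i ∈ Finset.range m, ((L : ℝ≥0∞) + 1) ^ i / 2 ^ n :=
          Finset.sum_le_sum fun i _ => h i
      _ = (∑ i ∈ Finset.range m, ((L : ℝ≥0∞) + 1) ^ i) / 2 ^ n := by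
          simp only [div_eq_mul_inv, ← Finset.sum_mul]
      _ ≤ ((L : ℝ≥0∞) + 1) ^ m / 2 ^ n := by
          apply ENNReal.div_le_div_right
          have := hgeom m
          have hcast : (((∑ i ∈ Finset.range m, (L + 1) ^ i : ℕ)) : ℝ≥0∞)
              ≤ (((L + 1) ^ m : ℕ) : ℝ≥0∞) := by exact_mod_cast this
          simpa [Nat.cast_sum, Nat.cast_pow] using hcast
      _ ≤ 1 := by
          rw [ENNReal.div_le_iff (by positivity) (by simp), one_mul]
          have : (((L + 1) ^ m : ℕ) : ℝ≥0∞) ≤ (((2 : ℕ) ^ n : ℕ) : ℝ≥0∞) := by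
            exact_mod_cast hLm
          simpa [Nat.cast_pow] using this
  -- measurable hulls
  set s : ℕ → Set Ω := fun i => toMeasurable μ {ω | T ω ≤ i} with hs
  have hsmeas : ∀ i, MeasurableSet (s i) := fun i => measurableSet_toMeasurable _ _
  have hsμ : ∀ i, μ (s i) = μ {ω | T ω ≤ i} := fun i => measure_toMeasurable _
  -- lower bound function
  have key : ∑ i ∈ Finset.range m, μ ((s i)ᶜ) ≤ ∫⁻ ω, (T ω : ℝ≥0∞) ∂μ := by
    have hgle : (fun ω => ∑ i ∈ Finset.range m, (s i)ᶜ.indicator (fun _ => (1 : ℝ≥0∞)) ω)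
        ≤ fun ω => (T ω : ℝ≥0∞) := by
      intro ω
      calc ∑ i ∈ Finset.range m, (s i)ᶜ.indicator (fun _ => (1 : ℝ≥0∞)) ω
          ≤ ∑ i ∈ Finset.range m, (if i < T ω then (1 : ℝ≥0∞) else 0) := by
            apply Finset.sum_le_sum
            intro i _
            by_cases hω : ω ∈ (s i)ᶜ
            · have hsub : {ω | T ω ≤ i} ⊆ s i := subset_toMeasurable _ _
              have : ¬ T ω ≤ i := fun hle => hω (hsub hle)
              rw [Set.indicator_of_mem hω, if_pos (by omega)]
            · rw [Set.indicator_of_notMem hω]; exact zero_le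
        _ = ((Finset.range m).filter (fun i => i < T ω)).card := by
            rw [Finset.sum_boole]
        _ ≤ (T ω : ℝ≥0∞) := by
            have : (Finset.range m).filter (fun i => i < T ω) ⊆ Finset.range (T ω) := by
              intro i hi
              simp only [Finset.mem_filter, Finset.mem_range] at hi ⊢
              exact hi.2
            have := Finset.card_le_card this
            simp only [Finset.card_range] at this
            exact_mod_cast this
    calc ∑ i ∈ Finset.range m, μ ((s i)ᶜ)
        = ∫⁻ ω, ∑ i ∈ Finset.range m, (s i)ᶜ.indicator (fun _ => (1 : ℝ≥0∞)) ω ∂μ := by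
          rw [lintegral_finset_sum]
          · congr 1
            ext i
            rw [lintegral_indicator (hsmeas i).compl]
            simp
          · exact fun i _ => measurable_const.indicator (hsmeas i).compl
      _ ≤ _ := lintegral_mono hgle
  -- lower bound the sum of complement measures
  have hcompl : ∀ i, (1 : ℝ≥0∞) - μ (s i) = μ ((s i)ᶜ) := by
    intro i
    rw [measure_compl (hsmeas i) (measure_ne_top μ _), measure_univ]
  have hmsub : (m : ℝ≥0∞) - 1 ≤ ∑ i ∈ Finset.range m, μ ((s i)ᶜ) := by
    have hA : ∑ i ∈ Finset.range m, μ (s i) ≤ 1 := by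
      calc ∑ i ∈ Finset.range m, μ (s i) = ∑ i ∈ Finset.range m, μ {ω | T ω ≤ i} := by
            exact Finset.sum_congr rfl fun i _ => hsμ i
        _ ≤ 1 := hsum1
    have hmle : (m : ℝ≥0∞) ≤ ∑ i ∈ Finset.range m, μ ((s i)ᶜ) + ∑ i ∈ Finset.range m, μ (s i) := by
      rw [← Finset.sum_add_distrib]
      calc (m : ℝ≥0∞) = ∑ _i ∈ Finset.range m, (1 : ℝ≥0∞) := by simp
        _ ≤ _ := by
            apply Finset.sum_le_sum
            intro i _
            rw [← hcompl i]
            rw [tsub_add_cancel_of_le prob_le_one]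
    calc (m : ℝ≥0∞) - 1 ≤ (m : ℝ≥0∞) - ∑ i ∈ Finset.range m, μ (s i) :=
          tsub_le_tsub_left hA _
      _ ≤ ∑ i ∈ Finset.range m, μ ((s i)ᶜ) := by
          rw [tsub_le_iff_right]
          exact hmle
  -- final real arithmetic
  have hfinal : ENNReal.ofReal ((n : ℝ) / c - 2) ≤ (m : ℝ≥0∞) - 1 := by
    have hm1 : (1 : ℕ) ≤ m := by
      have : (1 : ℝ) < (n : ℝ) / c - 1 := by linarith
      have : (1 : ℝ) ≤ (m : ℝ) := by linarith
      exact_mod_cast this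
    have : (n : ℝ) / c - 2 ≤ (m : ℝ) - 1 := by linarith
    calc ENNReal.ofReal ((n : ℝ) / c - 2) ≤ ENNReal.ofReal ((m : ℝ) - 1) :=
          ENNReal.ofReal_le_ofReal this
      _ = (m : ℝ≥0∞) - 1 := by
          rw [ENNReal.ofReal_sub _ zero_le_one]
          simp
  exact hfinal.trans (hmsub.trans key)
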